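/- Let X be an ordered locally convex space admitting a strictly positive element U ∈ X_+, A a convex acceptance set with nonempty interior, and S a traded asset with ρ_{A,S} > −∞ everywhere. Then ρ_{A,S} is finitely valued on X if and only if ρ_{A,S}(−λU) < ∞ for all λ > 0. -/

import Mathlib

open Filter Topology

variable {X : Type*} [AddCommGroup X] [Module ℝ X] [PartialOrder X]
  [CovariantClass X X (· + ·) (· ≤ ·)] [PosSMulMono ℝ X]
  [TopologicalSpace X] [IsTopologicalAddGroup X] [ContinuousSMul ℝ X]

/-- The risk measure `ρ_{A,S}(x) = inf {m : x + (m/S₀)·S_T ∈ A}`, valued in `EReal`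
(with `inf ∅ = ⊤` and unbounded-below giving `⊥`). -/
noncomputable def rho (A : Set X) (S0 : ℝ) (ST : X) (x : X) : EReal :=
  sInf ((fun r : ℝ => (r : EReal)) '' {r : ℝ | x + (r / S0) • ST ∈ A})

/-- A set is monotone if it contains, with any element, every larger element. -/
def MonotoneSet (A : Set X) : Prop := ∀ x ∈ A, ∀ y, x ≤ y → y ∈ A

/-- An acceptance set: nonempty, proper, and monotone. -/
def AcceptanceSet (A : Set X) : Prop := A.Nonempty ∧ A ≠ Set.univ ∧ MonotoneSet A

/-- The algebraic core (algebraic interior) of a set. -/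
def algCore (A : Set X) : Set X :=
  {x | ∀ y : X, ∃ ε > 0, ∀ l : ℝ, |l| < ε → x + l • y ∈ A}

/-- `U` is strictly positive: every nonzero positive continuous linear functional is
strictly positive on `U`. -/
def StrictlyPositiveElt (U : X) : Prop :=
  0 ≤ U ∧ ∀ ψ : X →L[ℝ] ℝ, ψ ≠ 0 → (∀ x : X, 0 ≤ x → 0 ≤ ψ x) → 0 < ψ U

lemma rho_ne_top_iff (A : Set X) (S0 : ℝ) (ST : X) (x : X) :
    rho A S0 ST x ≠ ⊤ ↔ ∃ r : ℝ, x + (r / S0) • ST ∈ A := by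
  constructor
  · intro h
    by_contra hne
    push_neg at hne
    have : {r : ℝ | x + (r / S0) • ST ∈ A} = ∅ := by
      ext r; simp [hne r]
    rw [rho, this] at h
    simp at h
  · rintro ⟨r, hr⟩
    have h1 : rho A S0 ST x ≤ (r : EReal) :=
      sInf_le ⟨r, hr, rfl⟩
    exact ne_top_of_le_ne_top (EReal.coe_ne_top r) h1

/-- for a convex acceptance set with nonempty interior in an ordered
locally convex space admitting a strictly positive element U, and ρ_{A,S} > -∞
everywhere, ρ_{A,S} is finitely valued iff ρ_{A,S}(-λU) < ∞ for all λ > 0. -/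
theorem rho_finite_iff_finite_on_strictlyPositive_ray [LocallyConvexSpace ℝ X]
    (U : X) (hU : StrictlyPositiveElt U)
    (A : Set X) (S0 : ℝ) (ST : X)
    (hA : AcceptanceSet A) (hconv : Convex ℝ A) (hint : (interior A).Nonempty)
    (hS0 : 0 < S0) (hST : 0 ≤ ST) (hSTne : ST ≠ 0)
    (hnobot : ∀ x : X, rho A S0 ST x ≠ ⊥) :
    (∀ x : X, rho A S0 ST x ≠ ⊤) ↔ (∀ l : ℝ, 0 < l → rho A S0 ST (-(l • U)) ≠ ⊤) := by
  constructor
  · intro h l _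
    exact h _
  · intro h x
    rw [rho_ne_top_iff]
    by_contra hne
    push_neg at hne
    -- the line through x in direction ST is disjoint from A
    set t : Set X := {y | ∃ r : ℝ, y = x + (r / S0) • ST} with ht
    have htconv : Convex ℝ t := by
      rintro p ⟨r, rfl⟩ q ⟨s, rfl⟩ a b ha hb hab
      refine ⟨a * r + b * s, ?_⟩
      have hs : a * (r / S0) + b * (s / S0) = (a * r + b * s) / S0 := by ring
      rw [smul_add, smul_add, smul_smul, smul_smul]
      rw [show a • x + (a * (r / S0)) • ST + (b • x + (b * (s / S0)) • ST)
          = (a + b) • x + (a * (r / S0) + b * (s / S0)) • ST by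
        rw [add_smul, add_smul]; abel]
      rw [hab, one_smul, hs]
    have hdisj : Disjoint (interior A) t := by
      rw [Set.disjoint_left]
      rintro y hy ⟨r, rfl⟩
      exact hne r (interior_subset hy)
    obtain ⟨f, u, hfA, hft⟩ :=
      geometric_hahn_banach_open (hconv.interior) isOpen_interior htconv hdisj
    -- f ST = 0
    have hline : ∀ r : ℝ, u ≤ f x + (r / S0) * f ST := by
      intro r
      have := hft _ ⟨r, rfl⟩
      simpa [map_add, map_smul, smul_eq_mul] using this
    have hfST : f ST = 0 := by
      by_contra hfST
      have h2 := hline (S0 * ((u - f x - 1) / f ST))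
      have h3 : S0 * ((u - f x - 1) / f ST) / S0 * f ST = u - f x - 1 := by
        field_simp
      rw [h3] at h2
      linarith
    have hux : u ≤ f x := by
      have := hline 0; simpa using this
    obtain ⟨a₀, ha₀⟩ := hint
    have hfa₀ : f a₀ < u := hfA _ ha₀
    -- f ≤ u on A
    have hAle : ∀ a ∈ A, f a ≤ u := by
      intro a ha
      by_contra hgt
      push_neg at hgt
      set c : ℝ := (f a - u) / (2 * (f a - f a₀)) with hc
      have hd : 0 < f a - f a₀ := by linarith
      have hc0 : 0 < c := div_pos (by linarith) (by linarith)
      have hc1 : c < 1 := by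
        rw [hc, div_lt_one (by linarith)]
        linarith
      have hmem : c • a₀ + (1 - c) • a ∈ interior A :=
        hconv.combo_interior_self_mem_interior ha₀ ha hc0 (by linarith) (by ring)
      have hlt := hfA _ hmem
      rw [map_add, map_smul, map_smul, smul_eq_mul, smul_eq_mul] at hlt
      have hce : c * (f a - f a₀) = (f a - u) / 2 := by
        rw [hc, div_mul_eq_mul_div, mul_comm 2, ← div_div,
          mul_div_assoc, div_self hd.ne', mul_one]
      nlinarith [hlt, hce]
    -- -f is a positive functional
    have hpos : ∀ y : X, 0 ≤ y → f y ≤ 0 := by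
      intro y hy
      by_contra hgt
      push_neg at hgt
      set s : ℝ := (u - f a₀) / f y + 1 with hs
      have hs0 : 0 < s := by
        have h4 : 0 < (u - f a₀) / f y := div_pos (by linarith) hgt
        rw [hs]; linarith
      have : a₀ + s • y ∈ A := hA.2.2 a₀ (interior_subset ha₀) _
        (le_add_of_nonneg_right (smul_nonneg hs0.le hy))
      have hle := hAle _ this
      rw [map_add, map_smul, smul_eq_mul] at hle
      have : s * f y = u - f a₀ + f y := by
        rw [hs, add_mul, one_mul, div_mul_cancel₀ _ hgt.ne']
      nlinarith
    have hfne : f ≠ 0 := by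
      intro h0
      rw [h0] at hfa₀ hux
      simp at hfa₀ hux
      linarith
    have hfU : 0 < (-f) U := hU.2 (-f) (neg_ne_zero.mpr hfne)
      (fun y hy => by simpa using hpos y hy)
    have hfU' : f U < 0 := by
      have : (-f) U = -(f U) := rfl
      linarith [hfU, this ▸ hfU]
    -- contradiction with ρ(-λU) ≠ ⊤ for large λ
    set l : ℝ := (|u| + 1) / (-(f U)) with hl
    have hl0 : 0 < l := div_pos (by positivity) (by linarith)
    obtain ⟨r, hr⟩ := (rho_ne_top_iff A S0 ST (-(l • U))).mp (h l hl0)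
    have := hAle _ hr
    rw [map_add, map_neg, map_smul, map_smul, smul_eq_mul, smul_eq_mul, hfST,
      mul_zero, add_zero] at this
    have hlval : l * (-(f U)) = |u| + 1 := by
      rw [hl, div_mul_cancel₀]
      linarith
    have habs : u ≤ |u| := le_abs_self u
    nlinarith
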